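/- The function W₀(ξ) = (e^ξ - 1)²/(e^{ξ/2}√(e^{2ξ}-1)) satisfies the inequality W₀'(ξ) - ((e^{2ξ}+1)/(2(e^{2ξ}-1)))·W₀(ξ) ≥ 0 for all ξ > 0. -/

import Mathlib

noncomputable def W₀ (ξ : ℝ) : ℝ :=
  (Real.exp ξ - 1) ^ 2 / (Real.exp (ξ / 2) * Real.sqrt (Real.exp (2 * ξ) - 1))

/-- `W₀' - ((e^{2ξ}+1)/(2(e^{2ξ}-1)))·W₀ ≥ 0` for all `ξ > 0`. -/
theorem W0_inequality (ξ : ℝ) (hξ : 0 < ξ) :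
    deriv W₀ ξ - ((Real.exp (2 * ξ) + 1) / (2 * (Real.exp (2 * ξ) - 1))) * W₀ ξ ≥ 0 := by
  have hE1 : (1:ℝ) < Real.exp ξ := by nlinarith [Real.add_one_le_exp ξ]
  have hE2 : (1:ℝ) < Real.exp (2 * ξ) := by nlinarith [Real.add_one_le_exp (2*ξ)]
  have hg : Real.exp (2 * ξ) - 1 > 0 := by linarith
  set s := Real.sqrt (Real.exp (2 * ξ) - 1) with hs_def
  have hs : 0 < s := Real.sqrt_pos.mpr hg
  have hs2 : s ^ 2 = Real.exp (2 * ξ) - 1 := Real.sq_sqrt hg.le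
  set h := Real.exp (ξ / 2) with hh_def
  have hh : 0 < h := Real.exp_pos _
  have hh2 : h ^ 2 = Real.exp ξ := by
    have e : ξ / 2 + ξ / 2 = ξ := by ring
    rw [hh_def, sq, ← Real.exp_add, e]
  have hE22 : Real.exp (2 * ξ) = Real.exp ξ ^ 2 := by
    rw [two_mul, Real.exp_add, sq]
  -- derivative computation
  have h1 : HasDerivAt (fun x => Real.exp (2 * x) - 1) (2 * Real.exp (2 * ξ)) ξ := by
    have := ((Real.hasDerivAt_exp (2 * ξ)).comp ξ ((hasDerivAt_id ξ).const_mul 2))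
    simpa [mul_comm] using this.sub_const 1
  have h2 : HasDerivAt (fun x => Real.sqrt (Real.exp (2 * x) - 1))
      (1 / (2 * s) * (2 * Real.exp (2 * ξ))) ξ :=
    (Real.hasDerivAt_sqrt hg.ne').comp ξ h1
  have h3 : HasDerivAt (fun x => Real.exp (x / 2)) (h * (1 / 2)) ξ := by
    have := ((Real.hasDerivAt_exp (ξ / 2)).comp ξ ((hasDerivAt_id ξ).div_const 2))
    simpa [Function.comp_def, hh_def] using this
  have h4 : HasDerivAt (fun x => Real.exp (x / 2) * Real.sqrt (Real.exp (2 * x) - 1))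
      (h * (1 / 2) * s + h * (1 / (2 * s) * (2 * Real.exp (2 * ξ)))) ξ := h3.mul h2
  have h5 : HasDerivAt (fun x => (Real.exp x - 1) ^ 2)
      (2 * (Real.exp ξ - 1) ^ 1 * Real.exp ξ) ξ :=
    ((Real.hasDerivAt_exp ξ).sub_const 1).pow 2
  have hden : h * s ≠ 0 := by positivity
  have h6 : HasDerivAt W₀
      ((2 * (Real.exp ξ - 1) ^ 1 * Real.exp ξ * (h * s) -
        (Real.exp ξ - 1) ^ 2 * (h * (1 / 2) * s + h * (1 / (2 * s) * (2 * Real.exp (2 * ξ))))) /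
        (h * s) ^ 2) ξ := h5.div h4 hden
  rw [h6.deriv]
  unfold W₀
  rw [← hs_def, ← hh_def]
  rw [ge_iff_le, sub_nonneg]
  rw [hE22] at hs2 ⊢
  set E := Real.exp ξ
  have hE21 : E ^ 2 - 1 > 0 := by nlinarith
  rw [div_mul_div_comm, div_le_div_iff₀ (by positivity) (by positivity)]
  have expand : (2 * (E - 1) ^ 1 * E * (h * s) -
      (E - 1) ^ 2 * (h * (1 / 2) * s + h * (1 / (2 * s) * (2 * E ^ 2)))) * (2 * (E ^ 2 - 1) * (h * s))
      = (E ^ 2 + 1) * (E - 1) ^ 2 * (h * s) ^ 2 + 4 * E * (E-1)^2 * h^2 * s^2 := by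
    have hE2s : E ^ 2 = s ^ 2 + 1 := by rw [hs2]; ring
    field_simp
    linear_combination ((E - 1) * (s ^ 2 * (3 * E + 1) - (4 * E * s ^ 2 - (E - 1) * (s ^ 2 + 2 * E ^ 2)))) * hs2
  rw [expand]
  have hpos : 0 ≤ 4 * E * (E - 1) ^ 2 * h ^ 2 * s ^ 2 := by positivity
  linarith
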